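/- arXiv:2106.06706 — 2 statements merged into one kernel-verified Lean document; each statement's English description precedes it below -/
import Mathlib

section
/- In the repeated stochastic team formation model where all teams (hyperedges) have cardinality at most k, for every stable matching process SM (i.e., for every tie-breaking rule in the greedy step), every online algorithm ALG, and all nonnegative round weights w_1, …, w_T, the expected reward of SM is at least 1/(2k) times the expected reward of ALG. -/
open Finset

/-- A hypergraph of potential teams: each hyperedge (team) is a subset of the
agent set `V`, and distinct hyperedges are distinct subsets. -/
structure TeamStruct (V H : Type) where
  mem : H → Finset V
  mem_injective : Function.Injective mem

variable {V H : Type}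

/-- A hypergraph matching: a family of pairwise disjoint teams. -/
def TeamStruct.IsHMatching (G : TeamStruct V H) (M : Finset H) : Prop :=
  ∀ S ∈ M, ∀ T ∈ M, S ≠ T → Disjoint (G.mem S) (G.mem T)

/-- `select` is an online algorithm: under each realization `ω` it selects a
hypergraph matching in every round, and its round-`t` selection depends only
on its own selections in earlier rounds and on the realized values of the
teams it selected in those rounds. -/
def TeamStruct.IsOnline (G : TeamStruct V H) (select : (H → Bool) → ℕ → Finset H) : Prop :=
  (∀ ω t, G.IsHMatching (select ω t)) ∧
  (∀ ω ω' t, (∀ s, s < t → ∀ S ∈ select ω s, ω' S = ω S) → select ω' t = select ω t)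

/-- Probability of the realization `ω` under independent Bernoulli teams. -/
def probOf [Fintype H] (p : H → ℝ) (ω : H → Bool) : ℝ :=
  ∏ S : H, if ω S then p S else 1 - p S

/-- Expected reward of an algorithm: the `w`-weighted expected number of
successful selected teams over rounds `0, …, T-1`. -/
noncomputable def expectedReward [Fintype H] [DecidableEq H] (p : H → ℝ) (w : ℕ → ℝ)
    (T : ℕ) (select : (H → Bool) → ℕ → Finset H) : ℝ :=
  ∑ ω : H → Bool, probOf p ω *
    ∑ t ∈ Finset.range T, w t * ((select ω t).filter (fun S => ω S)).card

/-- Teams selected by `select` in rounds before `t` under realization `ω`. -/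
def selectedBefore [DecidableEq H] (select : (H → Bool) → ℕ → Finset H)
    (ω : H → Bool) (t : ℕ) : Finset H :=
  (Finset.range t).biUnion (select ω)

/-- A team `S` is available for the greedy step, given the dead (previously
selected and revealed unsuccessful) teams `D` and the current partial matching
`M`: it is not dead, not already in `M`, and is disjoint from every member of
`M`. -/
def TeamStruct.Avail (G : TeamStruct V H) (D M : Finset H) (S : H) : Prop :=
  S ∉ D ∧ S ∉ M ∧ ∀ T ∈ M, Disjoint (G.mem S) (G.mem T)

/-- `L` records, in order, the teams added by a run of the greedy procedure
extending the committed matching `A`, avoiding dead teams `D`: each added team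
is available (w.r.t. the matching built so far) of maximum probability, and at
the end no available team remains. -/
def TeamStruct.IsGreedyRun [DecidableEq H] (G : TeamStruct V H) (p : H → ℝ)
    (D A : Finset H) (L : List H) : Prop :=
  (∀ i : Fin L.length,
      G.Avail D (A ∪ (L.take i).toFinset) (L.get i) ∧
      ∀ S, G.Avail D (A ∪ (L.take i).toFinset) S → p S ≤ p (L.get i)) ∧
  (∀ S, ¬ G.Avail D (A ∪ L.toFinset) S)

/-- `select` is a stable matching process for team formation: an online
algorithm which in each round keeps all previously selected successful teams
and augments them greedily (ties broken arbitrarily). -/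
def TeamStruct.IsSM [DecidableEq H] (G : TeamStruct V H) (p : H → ℝ)
    (select : (H → Bool) → ℕ → Finset H) : Prop :=
  G.IsOnline select ∧
  ∀ ω t,
    ∃ L : List H,
      G.IsGreedyRun p
        ((selectedBefore select ω t).filter (fun S => ¬ ω S))
        ((selectedBefore select ω t).filter (fun S => ω S)) L ∧
      select ω t = (selectedBefore select ω t).filter (fun S => ω S) ∪ L.toFinset


section Aux


variable [DecidableEq H]

theorem selBefore_mono (sel : (H → Bool) → ℕ → Finset H) (ω : H → Bool)
    {s t : ℕ} (h : s ≤ t) : selectedBefore sel ω s ⊆ selectedBefore sel ω t :=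
  Finset.biUnion_subset_biUnion_of_subset_left _ (Finset.range_subset_range.2 h)

theorem select_sub_selBefore (sel : (H → Bool) → ℕ → Finset H) (ω : H → Bool)
    {s t : ℕ} (h : s < t) : sel ω s ⊆ selectedBefore sel ω t := fun x hx =>
  Finset.mem_biUnion.2 ⟨s, Finset.mem_range.2 h, hx⟩

theorem selBefore_succ (sel : (H → Bool) → ℕ → Finset H) (ω : H → Bool) (t : ℕ) :
    selectedBefore sel ω (t + 1) = selectedBefore sel ω t ∪ sel ω t := by
  unfold selectedBefore
  rw [Finset.range_add_one, Finset.biUnion_insert]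
  exact Finset.union_comm _ _

theorem online_agree {G : TeamStruct V H} {sel : (H → Bool) → ℕ → Finset H}
    (hon : G.IsOnline sel) {ω ω' : H → Bool} {S : H}
    (hdiff : ∀ X, X ≠ S → ω' X = ω X) {r : ℕ}
    (hS : S ∉ selectedBefore sel ω r) : sel ω' r = sel ω r :=
  hon.2 ω ω' r (fun s hs X hX =>
    hdiff X (fun h => hS (h ▸ select_sub_selBefore sel ω hs hX)))


theorem mem_selBefore_of_agree {G : TeamStruct V H} {sel : (H → Bool) → ℕ → Finset H}
    (hon : G.IsOnline sel) {ω ω' : H → Bool} {T : H}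
    (hdiff : ∀ X, X ≠ T → ω' X = ω X) {n : ℕ}
    (h : T ∈ selectedBefore sel ω n) : T ∈ selectedBefore sel ω' n := by
  classical
  obtain ⟨s, hs, hTs⟩ := Finset.mem_biUnion.1 h
  have hex : ∃ r, T ∈ sel ω r := ⟨s, hTs⟩
  have hrs : Nat.find hex ≤ s := Nat.find_min' hex hTs
  have hspec : T ∈ sel ω (Nat.find hex) := Nat.find_spec hex
  have hnb : T ∉ selectedBefore sel ω (Nat.find hex) := by
    intro hmem
    obtain ⟨s', hs', hTs'⟩ := Finset.mem_biUnion.1 hmem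
    exact Nat.find_min hex (Finset.mem_range.1 hs') hTs'
  refine Finset.mem_biUnion.2 ⟨Nat.find hex,
    Finset.mem_range.2 (lt_of_le_of_lt hrs (Finset.mem_range.1 hs)), ?_⟩
  rw [online_agree hon hdiff hnb]
  exact hspec

theorem mem_selBefore_update_iff {G : TeamStruct V H} {sel : (H → Bool) → ℕ → Finset H}
    (hon : G.IsOnline sel) (ω : H → Bool) (T : H) (b : Bool) (n : ℕ) :
    T ∈ selectedBefore sel (Function.update ω T b) n ↔ T ∈ selectedBefore sel ω n := by
  constructor
  · intro h
    exact mem_selBefore_of_agree hon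
      (fun X hX => (Function.update_of_ne hX _ _).symm) h
  · intro h
    exact mem_selBefore_of_agree hon
      (fun X hX => Function.update_of_ne hX _ _) h

-- a family of pairwise disjoint teams, each meeting a fixed finite set B,
-- has cardinality at most |B|
theorem meet_card [DecidableEq V] (G : TeamStruct V H) {M : Finset H}
    (hM : G.IsHMatching M) (B : Finset V) :
    (M.filter (fun S => ¬ Disjoint (G.mem S) B)).card ≤ B.card := by
  classical
  set F := M.filter (fun S => ¬ Disjoint (G.mem S) B) with hF
  rcases F.eq_empty_or_nonempty with h | h
  · rw [h]; simp
  · have hw : ∀ S ∈ F, ∃ v, v ∈ G.mem S ∧ v ∈ B := by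
      intro S hS
      exact Finset.not_disjoint_iff.1 (Finset.mem_filter.1 hS).2
    obtain ⟨S0, hS0⟩ := h
    obtain ⟨v0, -, -⟩ := hw S0 hS0
    have hch : ∀ S : H, ∃ v : V, S ∈ F → v ∈ G.mem S ∧ v ∈ B := by
      intro S
      by_cases hS : S ∈ F
      · obtain ⟨v, hv⟩ := hw S hS; exact ⟨v, fun _ => hv⟩
      · exact ⟨v0, fun h' => absurd h' hS⟩
    choose f hf using hch
    apply Finset.card_le_card_of_injOn f (fun S hS => (hf S hS).2)
    intro S1 h1 S2 h2 heq
    have m1 : S1 ∈ F := h1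
    have m2 : S2 ∈ F := h2
    by_contra hne
    have hd := hM S1 (Finset.mem_filter.1 m1).1 S2 (Finset.mem_filter.1 m2).1 hne
    exact (Finset.disjoint_left.1 hd (hf S1 m1).1) (heq ▸ (hf S2 m2).1)

theorem sm_round_filter {G : TeamStruct V H} {p : H → ℝ} {sm : (H → Bool) → ℕ → Finset H}
    (hsm : G.IsSM p sm) (ω : H → Bool) (t : ℕ) :
    (sm ω t).filter (fun S => ω S) = (selectedBefore sm ω (t + 1)).filter (fun S => ω S) := by
  obtain ⟨L, hrun, hsel⟩ := hsm.2 ω t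
  rw [selBefore_succ, Finset.filter_union]
  symm
  apply Finset.union_eq_right.2
  intro S hS
  rw [Finset.mem_filter] at hS ⊢
  refine ⟨?_, hS.2⟩
  rw [hsel]
  exact Finset.mem_union_left _ (Finset.mem_filter.2 hS)

end Aux

section Flip

variable {H : Type} [Fintype H] [DecidableEq H]


theorem flip_sum (p : H → ℝ) (S : H) (g : (H → Bool) → ℝ)
    (hg : ∀ ω b, g (Function.update ω S b) = g ω) :
    ∑ ω : H → Bool, probOf p ω * (if ω S then g ω else 0)
      = p S * ∑ ω : H → Bool, probOf p ω * g ω := by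
  classical
  set R : (H → Bool) → ℝ := fun ω => ∏ T ∈ Finset.univ.erase S, if ω T then p T else 1 - p T
    with hR
  have hprob : ∀ ω : H → Bool, probOf p ω = (if ω S then p S else 1 - p S) * R ω := by
    intro ω
    rw [probOf, ← Finset.mul_prod_erase Finset.univ _ (Finset.mem_univ S)]
  have hRupd : ∀ (ω : H → Bool) (b : Bool), R (Function.update ω S b) = R ω := by
    intro ω b
    apply Finset.prod_congr rfl
    intro T hT
    rw [Function.update_of_ne (Finset.mem_erase.1 hT).1]
  -- the two halves have equal R·g mass
  have key : ∑ ω ∈ Finset.univ.filter (fun ω : H → Bool => ω S = true), R ω * g ω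
      = ∑ ω ∈ Finset.univ.filter (fun ω : H → Bool => ¬ (ω S = true)), R ω * g ω := by
    apply Finset.sum_nbij' (i := fun ω => Function.update ω S false)
      (j := fun ω => Function.update ω S true)
    · intro a ha
      simp only [Finset.mem_filter, Finset.mem_univ, true_and] at ha ⊢
      simp [Function.update_self]
    · intro a ha
      simp only [Finset.mem_filter, Finset.mem_univ, true_and] at ha ⊢
      simp [Function.update_self]
    · intro a ha
      simp only [Finset.mem_filter, Finset.mem_univ, true_and] at ha
      rw [Function.update_idem]
      rw [show true = a S from ha.symm]
      exact Function.update_eq_self _ _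
    · intro a ha
      simp only [Finset.mem_filter, Finset.mem_univ, true_and] at ha
      rw [Function.update_idem]
      rw [show false = a S from (Bool.not_eq_true _ ▸ by simpa using ha : a S = false).symm]
      exact Function.update_eq_self _ _
    · intro a ha
      rw [hRupd, hg]
  -- split both sides along the value of ω S
  have hsplit : ∀ F : (H → Bool) → ℝ, ∑ ω : H → Bool, F ω
      = ∑ ω ∈ Finset.univ.filter (fun ω : H → Bool => ω S = true), F ω
        + ∑ ω ∈ Finset.univ.filter (fun ω : H → Bool => ¬ (ω S = true)), F ω := by
    intro F
    exact (Finset.sum_filter_add_sum_filter_not _ _ _).symm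
  rw [hsplit (fun ω => probOf p ω * (if ω S then g ω else 0)),
      hsplit (fun ω => probOf p ω * g ω)]
  have e1 : ∑ ω ∈ Finset.univ.filter (fun ω : H → Bool => ω S = true),
      probOf p ω * (if ω S then g ω else 0)
      = p S * ∑ ω ∈ Finset.univ.filter (fun ω : H → Bool => ω S = true), R ω * g ω := by
    rw [Finset.mul_sum]
    apply Finset.sum_congr rfl
    intro ω hω
    have hωS : ω S = true := (Finset.mem_filter.1 hω).2
    rw [hprob, hωS]
    simp only [if_true]
    ring
  have e2 : ∑ ω ∈ Finset.univ.filter (fun ω : H → Bool => ¬ (ω S = true)),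
      probOf p ω * (if ω S then g ω else 0) = 0 := by
    apply Finset.sum_eq_zero
    intro ω hω
    have hωS : ¬ (ω S = true) := (Finset.mem_filter.1 hω).2
    rw [if_neg hωS, mul_zero]
  have e3 : ∑ ω ∈ Finset.univ.filter (fun ω : H → Bool => ω S = true),
      probOf p ω * g ω
      = p S * ∑ ω ∈ Finset.univ.filter (fun ω : H → Bool => ω S = true), R ω * g ω := by
    rw [Finset.mul_sum]
    apply Finset.sum_congr rfl
    intro ω hω
    have hωS : ω S = true := (Finset.mem_filter.1 hω).2
    rw [hprob, hωS]
    simp only [if_true]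
    ring
  have e4 : ∑ ω ∈ Finset.univ.filter (fun ω : H → Bool => ¬ (ω S = true)),
      probOf p ω * g ω
      = (1 - p S) * ∑ ω ∈ Finset.univ.filter (fun ω : H → Bool => ¬ (ω S = true)), R ω * g ω := by
    rw [Finset.mul_sum]
    apply Finset.sum_congr rfl
    intro ω hω
    have hωS : ¬ (ω S = true) := (Finset.mem_filter.1 hω).2
    rw [hprob, if_neg hωS]
    ring
  rw [e1, e2, e3, e4, ← key]
  ring

end Flip

section Key

variable [DecidableEq H]

/-- If, in the world tilted to make `S` succeed, the online algorithm selects `S` in round `t`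
while the stable matching process has never selected `S` through round `t` and no
SM-known-success blocks `S`, then there are: a round `r ≤ t` at which `alg` (in the REAL world)
selects `S`, and a fresh greedy team `B` of SM's round `r` (in the real world) that blocks `S`
and has `p B ≥ p S`. -/
theorem key_blocker {G : TeamStruct V H} {p : H → ℝ} {sm alg : (H → Bool) → ℕ → Finset H}
    (hsm : G.IsSM p sm) (halg : G.IsOnline alg) (t : ℕ) (ω : H → Bool) (S : H)
    (hA0 : S ∈ alg (Function.update ω S true) t)
    (hWmem : S ∉ selectedBefore sm (Function.update ω S true) (t + 1))
    (hDisj : ∀ T ∈ (selectedBefore sm (Function.update ω S true) t).filter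
        (fun X => (Function.update ω S true) X), Disjoint (G.mem S) (G.mem T)) :
    ∃ (r : ℕ) (B : H) (v : V), r ≤ t ∧ S ∈ alg ω r ∧ B ∉ selectedBefore sm ω r ∧
      B ∈ selectedBefore sm ω (r + 1) ∧ p S ≤ p B ∧ v ∈ G.mem S ∧ v ∈ G.mem B := by
  classical
  set ω' := Function.update ω S true with hω'def
  have hdiff : ∀ X, X ≠ S → ω X = ω' X := fun X hX => (Function.update_of_ne hX _ _).symm
  have hdiff' : ∀ X, X ≠ S → ω' X = ω X := fun X hX => Function.update_of_ne hX _ _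
  -- SM runs identically in ω and ω' through round t
  have hsmAgree : ∀ r, r ≤ t → sm ω r = sm ω' r := by
    intro r hr
    apply hsm.1.2 ω' ω r
    intro s hs X hX
    have hXmem : X ∈ selectedBefore sm ω' (t + 1) :=
      select_sub_selBefore sm ω' (lt_of_lt_of_le hs (Nat.le_succ_of_le hr)) hX
    exact hdiff X (fun h => hWmem (h ▸ hXmem))
  have hWagree : ∀ s, s ≤ t + 1 → selectedBefore sm ω s = selectedBefore sm ω' s := by
    intro s hs
    unfold selectedBefore
    apply Finset.biUnion_congr rfl
    intro r hr
    have hr' : r < s := Finset.mem_range.1 hr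
    exact hsmAgree r (by omega)
  have hWS : S ∉ selectedBefore sm ω (t + 1) := by rw [hWagree (t + 1) le_rfl]; exact hWmem
  -- minimal round at which alg selects S, in world ω'
  have hexr : ∃ r, S ∈ alg ω' r := ⟨t, hA0⟩
  have hrt : Nat.find hexr ≤ t := Nat.find_min' hexr hA0
  set r := Nat.find hexr with hrdef
  have hrS : S ∈ alg ω' r := Nat.find_spec hexr
  have hnb : S ∉ selectedBefore alg ω' r := by
    intro hmem
    obtain ⟨s, hs, hSs⟩ := Finset.mem_biUnion.1 hmem
    exact Nat.find_min hexr (Finset.mem_range.1 hs) hSs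
  have halgeq : alg ω r = alg ω' r := online_agree halg hdiff hnb
  have hSalg : S ∈ alg ω r := by rw [halgeq]; exact hrS
  -- SM structures at round r under ω
  obtain ⟨L, hrun, hsel⟩ := hsm.2 ω r
  set W := selectedBefore sm ω r with hWdef
  set A := W.filter (fun X => ω X) with hAdef
  set D := W.filter (fun X => ¬ ω X) with hDdef
  have hSW1 : S ∉ selectedBefore sm ω (r + 1) :=
    fun h => hWS (selBefore_mono sm ω (by omega) h)
  have hsmsub : sm ω r ⊆ selectedBefore sm ω (r + 1) := by
    rw [selBefore_succ]; exact Finset.subset_union_right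
  have hSsm : S ∉ sm ω r := fun h => hSW1 (hsmsub h)
  have hSW : S ∉ W := fun h => hSW1 (selBefore_mono sm ω (Nat.le_succ r) h)
  have hSD : S ∉ D := fun h => hSW (Finset.filter_subset _ _ h)
  have hSAL : S ∉ A ∪ L.toFinset := by rw [hAdef, ← hsel]; exact hSsm
  have hADisj : ∀ T ∈ A, Disjoint (G.mem S) (G.mem T) := by
    intro T hT
    rw [hAdef, Finset.mem_filter] at hT
    have hTS : T ≠ S := fun h => hSW (h ▸ hT.1)
    apply hDisj
    rw [Finset.mem_filter]
    constructor
    · have hsub : W ⊆ selectedBefore sm ω' t := by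
        rw [← hWagree t (Nat.le_succ t)]
        exact selBefore_mono sm ω hrt
      exact hsub hT.1
    · rw [hdiff' T hTS]
      exact hT.2
  -- maximality of the greedy run at round r yields a blocker in L
  have hnotavail := hrun.2 S
  rw [TeamStruct.Avail] at hnotavail
  push_neg at hnotavail
  obtain ⟨T0, hT0mem, hT0d⟩ := hnotavail hSD hSAL
  have hT0L : T0 ∈ L := by
    rcases Finset.mem_union.1 hT0mem with h | h
    · exact absurd (hADisj T0 h) hT0d
    · exact List.mem_toFinset.1 h
  obtain ⟨j1, hj1eq⟩ := List.mem_iff_get.1 hT0L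
  have hexj : ∃ j : ℕ, ∃ hj : j < L.length, ¬ Disjoint (G.mem S) (G.mem (L.get ⟨j, hj⟩)) :=
    ⟨j1.1, j1.2, by rw [show L.get ⟨j1.1, j1.2⟩ = T0 from hj1eq]; exact hT0d⟩
  obtain ⟨hjlen, hjd⟩ := Nat.find_spec hexj
  set j := Nat.find hexj with hjdef
  set B := L.get ⟨j, hjlen⟩ with hBdef
  have hmin : ∀ i (hi : i < L.length), i < j → Disjoint (G.mem S) (G.mem (L.get ⟨i, hi⟩)) := by
    intro i hi hij
    by_contra hc
    exact Nat.find_min hexj hij ⟨hi, hc⟩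
  have havailS : G.Avail D (A ∪ (L.take j).toFinset) S := by
    refine ⟨hSD, ?_, ?_⟩
    · intro h
      apply hSAL
      rcases Finset.mem_union.1 h with h | h
      · exact Finset.mem_union_left _ h
      · exact Finset.mem_union_right _
          (List.mem_toFinset.2 (List.take_subset _ _ (List.mem_toFinset.1 h)))
    · intro T hT
      rcases Finset.mem_union.1 hT with h | h
      · exact hADisj T h
      · obtain ⟨i, hi, hieq⟩ := List.mem_take_iff_getElem.1 (List.mem_toFinset.1 h)
        have hil : i < L.length := lt_of_lt_of_le hi (min_le_right _ _)
        have hij : i < j := lt_of_lt_of_le hi (min_le_left _ _)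
        have hd := hmin i hil hij
        rw [show T = L.get ⟨i, hil⟩ from by
          rw [← hieq]; simp [List.get_eq_getElem]]
        exact hd
  have hpS : p S ≤ p B := (hrun.1 ⟨j, hjlen⟩).2 S havailS
  obtain ⟨hBD, hBAL, -⟩ := (hrun.1 ⟨j, hjlen⟩).1
  have hBA : B ∉ A := fun h => hBAL (Finset.mem_union_left _ h)
  have hBW : B ∉ W := by
    intro h
    by_cases hb : ω B = true
    · exact hBA (Finset.mem_filter.2 ⟨h, hb⟩)
    · exact hBD (Finset.mem_filter.2 ⟨h, hb⟩)
  have hBsm : B ∈ sm ω r := by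
    rw [hsel]
    exact Finset.mem_union_right _ (List.mem_toFinset.2 (L.get_mem _))
  have hBW1 : B ∈ selectedBefore sm ω (r + 1) := hsmsub hBsm
  obtain ⟨v, hv1, hv2⟩ := Finset.not_disjoint_iff.1 hjd
  exact ⟨r, B, v, hrt, hSalg, hBW, hBW1, hpS, hv1, hv2⟩

end Key

section Charge

variable [DecidableEq V] [DecidableEq H] [Fintype H]

theorem charge_lemma {G : TeamStruct V H} {p : H → ℝ} {k : ℕ}
    (hcard : ∀ S : H, (G.mem S).card ≤ k) (hp : ∀ S, 0 ≤ p S ∧ p S ≤ 1)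
    {sm alg : (H → Bool) → ℕ → Finset H}
    (hsm : G.IsSM p sm) (halg : G.IsOnline alg) (t : ℕ) (ω : H → Bool)
    (CQ : Finset H)
    (hCQ : ∀ S ∈ CQ,
        S ∈ alg (Function.update ω S true) t ∧
        S ∉ selectedBefore sm (Function.update ω S true) (t + 1) ∧
        ∀ T ∈ (selectedBefore sm (Function.update ω S true) t).filter
            (fun X => (Function.update ω S true) X), Disjoint (G.mem S) (G.mem T)) :
    ∑ S ∈ CQ, p S ≤ (k : ℝ) * ∑ T ∈ selectedBefore sm ω (t + 1), p T := by
  classical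
  have hWnonneg : (0 : ℝ) ≤ ∑ T ∈ selectedBefore sm ω (t + 1), p T :=
    Finset.sum_nonneg (fun T _ => (hp T).1)
  rcases CQ.eq_empty_or_nonempty with hemp | ⟨S0, hS0⟩
  · rw [hemp, Finset.sum_empty]
    positivity
  · -- default witnesses from S0
    have hS0' : True ∧ _ := ⟨trivial, hCQ S0 hS0⟩
    obtain ⟨r0d, B0d, v0d, -⟩ :=
      key_blocker hsm halg t ω S0 hS0'.2.1 hS0'.2.2.1 hS0'.2.2.2
    have hkey : ∀ S : H, ∃ (r : ℕ) (B : H) (v : V), S ∈ CQ →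
        (r ≤ t ∧ S ∈ alg ω r ∧ B ∉ selectedBefore sm ω r ∧
          B ∈ selectedBefore sm ω (r + 1) ∧ p S ≤ p B ∧ v ∈ G.mem S ∧ v ∈ G.mem B) := by
      intro S
      by_cases hS : S ∈ CQ
      · have hS' : True ∧ _ := ⟨trivial, hCQ S hS⟩
        obtain ⟨r, B, v, h1, h2, h3, h4, h5, h6, h7⟩ :=
          key_blocker hsm halg t ω S hS'.2.1 hS'.2.2.1 hS'.2.2.2
        exact ⟨r, B, v, fun _ => ⟨h1, h2, h3, h4, h5, h6, h7⟩⟩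
      · exact ⟨r0d, B0d, v0d, fun h => absurd h hS⟩
    choose fr fB fv hf using hkey
    have hmaps : ∀ S ∈ CQ, fB S ∈ selectedBefore sm ω (t + 1) := by
      intro S hS
      have h := hf S hS
      exact selBefore_mono sm ω (by omega) h.2.2.2.1
    calc ∑ S ∈ CQ, p S ≤ ∑ S ∈ CQ, p (fB S) :=
          Finset.sum_le_sum (fun S hS => (hf S hS).2.2.2.2.1)
      _ = ∑ T ∈ selectedBefore sm ω (t + 1),
            ∑ S ∈ CQ.filter (fun S => fB S = T), p (fB S) :=
          (Finset.sum_fiberwise_of_maps_to hmaps _).symm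
      _ ≤ ∑ T ∈ selectedBefore sm ω (t + 1), (k : ℝ) * p T := by
          apply Finset.sum_le_sum
          intro T hT
          have hinner : ∑ S ∈ CQ.filter (fun S => fB S = T), p (fB S)
              = ((CQ.filter (fun S => fB S = T)).card : ℝ) * p T := by
            rw [Finset.sum_congr rfl (fun S hS => by
              rw [(Finset.mem_filter.1 hS).2])]
            rw [Finset.sum_const, nsmul_eq_mul]
          rw [hinner]
          apply mul_le_mul_of_nonneg_right _ (hp T).1
          -- card of the fiber is at most k
          rcases (CQ.filter (fun S => fB S = T)).eq_empty_or_nonempty with hfe | ⟨Sf, hSf⟩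
          · rw [hfe]; simp
          · have hSf' := Finset.mem_filter.1 hSf
            set r0 := fr Sf with hr0
            have hsub : CQ.filter (fun S => fB S = T) ⊆
                (alg ω r0).filter (fun S => ¬ Disjoint (G.mem S) (G.mem T)) := by
              intro S hS
              have hS' := Finset.mem_filter.1 hS
              have hfS := hf S hS'.1
              have hfSf := hf Sf hSf'.1
              -- the rounds agree
              have hreq : fr S = r0 := by
                by_contra hne
                rcases lt_or_gt_of_ne hne with hlt | hgt
                · have : T ∈ selectedBefore sm ω r0 := by
                    rw [← hSf'.2] at *
                    exact selBefore_mono sm ω (by omega)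
                      (hS'.2 ▸ hfS.2.2.2.1)
                  exact (hSf'.2 ▸ hfSf.2.2.1) this
                · have : T ∈ selectedBefore sm ω (fr S) := by
                    exact selBefore_mono sm ω (by omega)
                      (hSf'.2 ▸ hfSf.2.2.2.1)
                  exact (hS'.2 ▸ hfS.2.2.1) this
              rw [Finset.mem_filter]
              constructor
              · rw [← hreq]; exact hfS.2.1
              · apply Finset.not_disjoint_iff.2
                exact ⟨fv S, hfS.2.2.2.2.2.1, hS'.2 ▸ hfS.2.2.2.2.2.2⟩
            calc ((CQ.filter (fun S => fB S = T)).card : ℝ)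
                ≤ (((alg ω r0).filter (fun S => ¬ Disjoint (G.mem S) (G.mem T))).card : ℝ) := by
                  exact_mod_cast Finset.card_le_card hsub
              _ ≤ ((G.mem T).card : ℝ) := by
                  exact_mod_cast meet_card G (halg.1 ω r0) (G.mem T)
              _ ≤ (k : ℝ) := by exact_mod_cast hcard T
      _ = (k : ℝ) * ∑ T ∈ selectedBefore sm ω (t + 1), p T := by
          rw [Finset.mul_sum]

end Charge

section Round

variable [DecidableEq V] [Fintype V] [Fintype H] [DecidableEq H]

theorem round_ineq (G : TeamStruct V H) (k : ℕ) (hk : 0 < k)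
    (hcard : ∀ S : H, (G.mem S).card ≤ k)
    (p : H → ℝ) (hp : ∀ S, 0 ≤ p S ∧ p S ≤ 1)
    (sm alg : (H → Bool) → ℕ → Finset H)
    (hsm : G.IsSM p sm) (halg : G.IsOnline alg) (t : ℕ) :
    ∑ ω : H → Bool, probOf p ω * (((alg ω t).filter (fun S => ω S)).card : ℝ)
      ≤ (2 * k : ℝ) *
        ∑ ω : H → Bool, probOf p ω * (((sm ω t).filter (fun S => ω S)).card : ℝ) := by
  classical
  have hpr : ∀ ω : H → Bool, 0 ≤ probOf p ω := by
    intro ω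
    apply Finset.prod_nonneg
    intro S _
    by_cases h : ω S
    · simp [h, (hp S).1]
    · simp [h, sub_nonneg.2 (hp S).2]
  -- abbreviations
  set A1 : (H → Bool) → Finset H :=
    fun ω => (selectedBefore sm ω (t + 1)).filter (fun S => ω S) with hA1def
  have hsmcard : ∀ ω : H → Bool,
      (((sm ω t).filter (fun S => ω S)).card : ℝ) = ((A1 ω).card : ℝ) := by
    intro ω
    rw [hA1def, sm_round_filter hsm ω t]
  set Bad : (H → Bool) → H → Prop := fun ω S =>
    S ∈ selectedBefore sm ω (t + 1) ∨
      ∃ T ∈ (selectedBefore sm ω t).filter (fun X => ω X),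
        ¬ Disjoint (G.mem S) (G.mem T) with hBaddef
  set C12 : (H → Bool) → Finset H :=
    fun ω => ((alg ω t).filter (fun S => ω S)).filter (fun S => Bad ω S) with hC12def
  set C3 : (H → Bool) → Finset H :=
    fun ω => ((alg ω t).filter (fun S => ω S)).filter (fun S => ¬ Bad ω S) with hC3def
  have hsplit : ∀ ω : H → Bool,
      (((alg ω t).filter (fun S => ω S)).card : ℝ)
        = ((C12 ω).card : ℝ) + ((C3 ω).card : ℝ) := by
    intro ω
    rw [hC12def, hC3def]
    push_cast [← Finset.card_filter_add_card_filter_not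
      (s := (alg ω t).filter (fun S => ω S)) (p := fun S => Bad ω S)]
    ring
  have hcard_ite : ∀ (s : Finset H) (f : H → ℝ),
      ∑ x ∈ s, f x = ∑ x : H, if x ∈ s then f x else 0 := by
    intro s f
    rw [Finset.sum_ite_mem, Finset.univ_inter]
  -- pointwise bound on C12
  have hC12bound : ∀ ω : H → Bool, ((C12 ω).card : ℝ) ≤ (k : ℝ) * ((A1 ω).card : ℝ) := by
    intro ω
    have hnat : (C12 ω).card ≤ k * (A1 ω).card := by
      have hex : ∀ S : H, ∃ T : H, S ∈ C12 ω →
          (T ∈ A1 ω ∧ (S = T ∨ (¬ Disjoint (G.mem S) (G.mem T)))) := by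
        intro S
        by_cases hS : S ∈ C12 ω
        · have hS' := Finset.mem_filter.1 hS
          have hωS : (ω S : Prop) := (Finset.mem_filter.1 hS'.1).2
          rcases hS'.2 with h | ⟨T, hT, hTd⟩
          · exact ⟨S, fun _ => ⟨Finset.mem_filter.2 ⟨h, hωS⟩, Or.inl rfl⟩⟩
          · have hT' := Finset.mem_filter.1 hT
            exact ⟨T, fun _ => ⟨Finset.mem_filter.2
              ⟨selBefore_mono sm ω (Nat.le_succ t) hT'.1, hT'.2⟩, Or.inr hTd⟩⟩
        · exact ⟨S, fun h => absurd h hS⟩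
      choose f hf using hex
      have hmaps : ∀ S ∈ C12 ω, f S ∈ A1 ω := fun S hS => (hf S hS).1
      rw [Finset.card_eq_sum_card_fiberwise hmaps]
      have hfib : ∀ T ∈ A1 ω, ((C12 ω).filter (fun S => f S = T)).card ≤ k := by
        intro T hT
        by_cases hTM : T ∈ alg ω t
        · have hsub : (C12 ω).filter (fun S => f S = T) ⊆ {T} := by
            intro S hS
            have hS' := Finset.mem_filter.1 hS
            have hSC := hS'.1
            have hSM : S ∈ alg ω t :=
              Finset.filter_subset _ _ (Finset.filter_subset _ _ hSC)
            rw [Finset.mem_singleton]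
            rcases (hf S hSC).2 with h | hd
            · rw [← hS'.2]; exact h
            · rw [hS'.2] at hd
              by_contra hne
              exact hd (halg.1 ω t S hSM T hTM hne)
          calc ((C12 ω).filter (fun S => f S = T)).card ≤ ({T} : Finset H).card :=
                Finset.card_le_card hsub
            _ = 1 := Finset.card_singleton T
            _ ≤ k := hk
        · have hsub : (C12 ω).filter (fun S => f S = T) ⊆
              (alg ω t).filter (fun S => ¬ Disjoint (G.mem S) (G.mem T)) := by
            intro S hS
            have hS' := Finset.mem_filter.1 hS
            have hSC := hS'.1
            have hSM : S ∈ alg ω t :=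
              Finset.filter_subset _ _ (Finset.filter_subset _ _ hSC)
            rcases (hf S hSC).2 with h | hd
            · exact absurd (hS'.2 ▸ h ▸ hSM) hTM
            · exact Finset.mem_filter.2 ⟨hSM, hS'.2 ▸ hd⟩
          calc ((C12 ω).filter (fun S => f S = T)).card
              ≤ ((alg ω t).filter (fun S => ¬ Disjoint (G.mem S) (G.mem T))).card :=
                Finset.card_le_card hsub
            _ ≤ (G.mem T).card := meet_card G (halg.1 ω t) (G.mem T)
            _ ≤ k := hcard T
      calc ∑ T ∈ A1 ω, ((C12 ω).filter (fun S => f S = T)).card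
          ≤ ∑ _T ∈ A1 ω, k := Finset.sum_le_sum hfib
        _ = (A1 ω).card * k := by rw [Finset.sum_const, smul_eq_mul]
        _ = k * (A1 ω).card := Nat.mul_comm _ _
    exact_mod_cast Nat.cast_le.2 hnat
  -- the W-mass / A1 identity (uses the flip lemma per team)
  have hWA : ∑ ω : H → Bool, probOf p ω * (∑ T ∈ selectedBefore sm ω (t + 1), p T)
      = ∑ ω : H → Bool, probOf p ω * ((A1 ω).card : ℝ) := by
    calc ∑ ω : H → Bool, probOf p ω * (∑ T ∈ selectedBefore sm ω (t + 1), p T)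
        = ∑ ω : H → Bool, ∑ T : H,
            probOf p ω * (if T ∈ selectedBefore sm ω (t + 1) then p T else 0) := by
          apply Finset.sum_congr rfl
          intro ω _
          rw [hcard_ite (selectedBefore sm ω (t + 1)) p, Finset.mul_sum]
      _ = ∑ T : H, ∑ ω : H → Bool,
            probOf p ω * (if T ∈ selectedBefore sm ω (t + 1) then p T else 0) :=
          Finset.sum_comm
      _ = ∑ T : H, ∑ ω : H → Bool,
            probOf p ω * (if T ∈ A1 ω then (1 : ℝ) else 0) := by
          apply Finset.sum_congr rfl
          intro T _
          have h1 : ∑ ω : H → Bool,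
              probOf p ω * (if T ∈ selectedBefore sm ω (t + 1) then p T else 0)
              = p T * ∑ ω : H → Bool,
                  probOf p ω * (if T ∈ selectedBefore sm ω (t + 1) then (1 : ℝ) else 0) := by
            rw [Finset.mul_sum]
            apply Finset.sum_congr rfl
            intro ω _
            by_cases h : T ∈ selectedBefore sm ω (t + 1) <;> simp [h] <;> ring
          have h2 := flip_sum p T
            (fun ω => if T ∈ selectedBefore sm ω (t + 1) then (1 : ℝ) else 0)
            (fun ω b => by
              by_cases h : T ∈ selectedBefore sm ω (t + 1)
              · rw [if_pos h, if_pos ((mem_selBefore_update_iff hsm.1 ω T b (t + 1)).2 h)]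
              · rw [if_neg h, if_neg
                  (fun hh => h ((mem_selBefore_update_iff hsm.1 ω T b (t + 1)).1 hh))])
          rw [h1, ← h2]
          apply Finset.sum_congr rfl
          intro ω _
          congr 1
          by_cases hb : ω T = true
          · by_cases hw : T ∈ selectedBefore sm ω (t + 1)
            · simp [hb, hw, hA1def, Finset.mem_filter]
            · simp [hb, hw, hA1def, Finset.mem_filter]
          · simp [hb, hA1def, Finset.mem_filter]
      _ = ∑ ω : H → Bool, ∑ T : H,
            probOf p ω * (if T ∈ A1 ω then (1 : ℝ) else 0) := Finset.sum_comm
      _ = ∑ ω : H → Bool, probOf p ω * ((A1 ω).card : ℝ) := by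
          apply Finset.sum_congr rfl
          intro ω _
          rw [← Finset.mul_sum]
          congr 1
          rw [← hcard_ite (A1 ω) (fun _ => (1 : ℝ))]
          rw [Finset.sum_const, nsmul_eq_mul, mul_one]
  -- the probabilistic bound on C3
  have hC3bound : ∑ ω : H → Bool, probOf p ω * ((C3 ω).card : ℝ)
      ≤ (k : ℝ) * ∑ ω : H → Bool, probOf p ω * ((A1 ω).card : ℝ) := by
    set Q : H → (H → Bool) → Prop := fun S ω =>
      S ∈ alg (Function.update ω S true) t ∧
      S ∉ selectedBefore sm (Function.update ω S true) (t + 1) ∧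
      ∀ T ∈ (selectedBefore sm (Function.update ω S true) t).filter
          (fun X => (Function.update ω S true) X), Disjoint (G.mem S) (G.mem T) with hQdef
    have hQinv : ∀ (S : H) (ω : H → Bool) (b : Bool),
        Q S (Function.update ω S b) ↔ Q S ω := by
      intro S ω b
      simp only [hQdef, Function.update_idem]
    have hQpoint : ∀ (S : H) (ω : H → Bool), S ∈ C3 ω ↔ ((ω S : Prop) ∧ Q S ω) := by
      intro S ω
      simp only [hC3def, Finset.mem_filter, hBaddef, hQdef]
      constructor
      · rintro ⟨⟨hSM, hωS⟩, hnb⟩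
        push_neg at hnb
        have hup : Function.update ω S true = ω := by
          conv_lhs => rw [show true = ω S from hωS.symm]
          exact Function.update_eq_self _ _
        rw [hup]
        exact ⟨hωS, hSM, hnb.1, hnb.2⟩
      · rintro ⟨hωS, hQ⟩
        have hup : Function.update ω S true = ω := by
          conv_lhs => rw [show true = ω S from hωS.symm]
          exact Function.update_eq_self _ _
        rw [hup] at hQ
        refine ⟨⟨hQ.1, hωS⟩, ?_⟩
        push_neg
        exact ⟨hQ.2.1, hQ.2.2⟩
    calc ∑ ω : H → Bool, probOf p ω * ((C3 ω).card : ℝ)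
        = ∑ ω : H → Bool, ∑ S : H, probOf p ω * (if S ∈ C3 ω then (1 : ℝ) else 0) := by
          apply Finset.sum_congr rfl
          intro ω _
          rw [← Finset.mul_sum]
          congr 1
          rw [← hcard_ite (C3 ω) (fun _ => (1 : ℝ))]
          rw [Finset.sum_const, nsmul_eq_mul, mul_one]
      _ = ∑ S : H, ∑ ω : H → Bool, probOf p ω * (if S ∈ C3 ω then (1 : ℝ) else 0) :=
          Finset.sum_comm
      _ = ∑ S : H, p S * ∑ ω : H → Bool, probOf p ω * (if Q S ω then (1 : ℝ) else 0) := by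
          apply Finset.sum_congr rfl
          intro S _
          rw [← flip_sum p S (fun ω => if Q S ω then (1 : ℝ) else 0)
            (fun ω b => by
              by_cases h : Q S ω
              · rw [if_pos ((hQinv S ω b).2 h), if_pos h]
              · rw [if_neg (fun hh => h ((hQinv S ω b).1 hh)), if_neg h])]
          apply Finset.sum_congr rfl
          intro ω _
          congr 1
          by_cases h1 : (ω S : Prop)
          · by_cases h2 : Q S ω
            · rw [if_pos ((hQpoint S ω).2 ⟨h1, h2⟩), if_pos h1, if_pos h2]
            · rw [if_neg (fun h => h2 ((hQpoint S ω).1 h).2), if_pos h1, if_neg h2]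
          · rw [if_neg (fun h => h1 ((hQpoint S ω).1 h).1), if_neg h1]
      _ = ∑ ω : H → Bool, probOf p ω * ∑ S ∈ Finset.univ.filter (fun S => Q S ω), p S := by
          simp only [Finset.mul_sum]
          rw [Finset.sum_comm]
          apply Finset.sum_congr rfl
          intro ω _
          rw [Finset.sum_filter]
          apply Finset.sum_congr rfl
          intro S _
          by_cases h : Q S ω <;> simp [h] <;> ring
      _ ≤ ∑ ω : H → Bool, probOf p ω * ((k : ℝ) * ∑ T ∈ selectedBefore sm ω (t + 1), p T) := by
          apply Finset.sum_le_sum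
          intro ω _
          apply mul_le_mul_of_nonneg_left _ (hpr ω)
          apply charge_lemma hcard hp hsm halg t ω
          intro S hS
          have hmem := (Finset.mem_filter.1 hS).2
          rw [hQdef] at hmem
          exact hmem
      _ = (k : ℝ) * ∑ ω : H → Bool, probOf p ω * (∑ T ∈ selectedBefore sm ω (t + 1), p T) := by
          rw [Finset.mul_sum]
          apply Finset.sum_congr rfl
          intro ω _
          ring
      _ = (k : ℝ) * ∑ ω : H → Bool, probOf p ω * ((A1 ω).card : ℝ) := by rw [hWA]
  -- assemble
  calc ∑ ω : H → Bool, probOf p ω * (((alg ω t).filter (fun S => ω S)).card : ℝ)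
      = ∑ ω : H → Bool,
          (probOf p ω * ((C12 ω).card : ℝ) + probOf p ω * ((C3 ω).card : ℝ)) := by
        apply Finset.sum_congr rfl
        intro ω _
        rw [hsplit ω]
        ring
    _ = ∑ ω : H → Bool, probOf p ω * ((C12 ω).card : ℝ)
          + ∑ ω : H → Bool, probOf p ω * ((C3 ω).card : ℝ) := Finset.sum_add_distrib
    _ ≤ (k : ℝ) * ∑ ω : H → Bool, probOf p ω * ((A1 ω).card : ℝ)
          + (k : ℝ) * ∑ ω : H → Bool, probOf p ω * ((A1 ω).card : ℝ) := by
        apply add_le_add _ hC3bound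
        calc ∑ ω : H → Bool, probOf p ω * ((C12 ω).card : ℝ)
            ≤ ∑ ω : H → Bool, probOf p ω * ((k : ℝ) * ((A1 ω).card : ℝ)) :=
              Finset.sum_le_sum (fun ω _ =>
                mul_le_mul_of_nonneg_left (hC12bound ω) (hpr ω))
          _ = (k : ℝ) * ∑ ω : H → Bool, probOf p ω * ((A1 ω).card : ℝ) := by
              rw [Finset.mul_sum]
              apply Finset.sum_congr rfl
              intro ω _
              ring
    _ = (2 * k : ℝ) * ∑ ω : H → Bool, probOf p ω * ((A1 ω).card : ℝ) := by ring
    _ = (2 * k : ℝ) *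
          ∑ ω : H → Bool, probOf p ω * (((sm ω t).filter (fun S => ω S)).card : ℝ) := by
        congr 1
        apply Finset.sum_congr rfl
        intro ω _
        rw [hsmcard ω]

end Round

/-- In team formation with teams of cardinality at most `k`,
every stable matching process is a `1/(2k)`-approximation to every online
algorithm. -/
theorem sm_teams_approximates_opt
    {V H : Type} [DecidableEq V] [Fintype V] [Fintype H] [DecidableEq H]
    (G : TeamStruct V H) (k : ℕ) (hk : 0 < k) (hcard : ∀ S : H, (G.mem S).card ≤ k)
    (p : H → ℝ) (hp : ∀ S, 0 ≤ p S ∧ p S ≤ 1)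
    (T : ℕ) (w : ℕ → ℝ) (hw : ∀ t, 0 ≤ w t)
    (sm alg : (H → Bool) → ℕ → Finset H)
    (hsm : G.IsSM p sm) (halg : G.IsOnline alg) :
    (1 / (2 * k) : ℝ) * expectedReward p w T alg ≤ expectedReward p w T sm := by
  classical
  have h2k : (0 : ℝ) < 2 * (k : ℝ) := by
    have : (0 : ℝ) < (k : ℝ) := by exact_mod_cast hk
    linarith
  have hswap : ∀ sel : (H → Bool) → ℕ → Finset H, expectedReward p w T sel
      = ∑ t ∈ Finset.range T, w t *
          ∑ ω : H → Bool, probOf p ω * (((sel ω t).filter (fun S => ω S)).card : ℝ) := by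
    intro sel
    rw [expectedReward]
    simp only [Finset.mul_sum]
    rw [Finset.sum_comm]
    apply Finset.sum_congr rfl
    intro t _
    apply Finset.sum_congr rfl
    intro ω _
    ring
  have hmain : expectedReward p w T alg ≤ (2 * (k : ℝ)) * expectedReward p w T sm := by
    rw [hswap alg, hswap sm, Finset.mul_sum]
    apply Finset.sum_le_sum
    intro t _
    have hround := round_ineq G k hk hcard p hp sm alg hsm halg t
    calc w t * ∑ ω : H → Bool, probOf p ω * (((alg ω t).filter (fun S => ω S)).card : ℝ)
        ≤ w t * ((2 * (k : ℝ)) *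
            ∑ ω : H → Bool, probOf p ω * (((sm ω t).filter (fun S => ω S)).card : ℝ)) :=
          mul_le_mul_of_nonneg_left hround (hw t)
      _ = (2 * (k : ℝ)) * (w t *
            ∑ ω : H → Bool, probOf p ω * (((sm ω t).filter (fun S => ω S)).card : ℝ)) := by
          ring
  calc (1 / (2 * k) : ℝ) * expectedReward p w T alg
      ≤ (1 / (2 * k) : ℝ) * ((2 * (k : ℝ)) * expectedReward p w T sm) := by
        apply mul_le_mul_of_nonneg_left hmain
        positivity
    _ = expectedReward p w T sm := by
        field_simp
end

section
/- Let G = (V, E) be a finite simple graph with nonnegative edge weights w, and let M be a matching such that every edge e ∈ E shares an endpoint with some edge f ∈ M satisfying w(f) ≥ w(e). Then for every matching M' in G, Σ_{e ∈ M} w(e) ≥ (1/2) · Σ_{e ∈ M'} w(e). -/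
open Finset

/-- A finite simple graph presented via an abstract edge type: each edge has a
set of exactly two endpoints, and distinct edges have distinct endpoint sets. -/
structure GraphEdges (V E : Type) where
  ends : E → Finset V
  card_ends : ∀ e, (ends e).card = 2
  ends_injective : Function.Injective ends

/-- A matching: a set of pairwise endpoint-disjoint edges. -/
def GraphEdges.IsMatching {V E : Type} (G : GraphEdges V E) (M : Finset E) : Prop :=
  ∀ e ∈ M, ∀ f ∈ M, e ≠ f → Disjoint (G.ends e) (G.ends f)

/-- If `M` is a matching such that every edge of the graph
shares an endpoint with some edge of `M` of at least its weight, then `M` is a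
`1/2`-approximation to every matching in total weight. -/
theorem greedy_matching_half_approx
    {V E : Type} [Fintype E]
    (G : GraphEdges V E) (w : E → ℝ) (hw : ∀ e, 0 ≤ w e)
    (M : Finset E) (hM : G.IsMatching M)
    (hgreedy : ∀ e : E, ∃ f ∈ M, (∃ v, v ∈ G.ends e ∧ v ∈ G.ends f) ∧ w e ≤ w f)
    (M' : Finset E) (hM' : G.IsMatching M') :
    (1 / 2 : ℝ) * ∑ e ∈ M', w e ≤ ∑ e ∈ M, w e := by
  classical
  choose g hgM hrest hwle using hgreedy
  choose v hv1 hv2 using hrest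
  have key : ∑ e ∈ M', w e ≤ ∑ e ∈ M', w (g e) :=
    Finset.sum_le_sum fun e _ => hwle e
  have hfib : ∑ f ∈ M, ∑ e ∈ M'.filter (fun e => g e = f), w (g e)
      = ∑ e ∈ M', w (g e) :=
    Finset.sum_fiberwise_of_maps_to (fun e _ => hgM e) _
  have hcard : ∀ f ∈ M, (M'.filter (fun e => g e = f)).card ≤ 2 := by
    intro f _
    have := Finset.card_le_card_of_injOn (s := M'.filter (fun e => g e = f)) (t := G.ends f) v
      (fun e he => by
        simp only [Finset.mem_coe, Finset.mem_filter] at he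
        exact he.2 ▸ hv2 e)
      (fun e1 he1 e2 he2 hve => by
        simp only [Finset.coe_filter, Set.mem_setOf_eq] at he1 he2
        by_contra hne
        exact Finset.disjoint_left.mp (hM' e1 he1.1 e2 he2.1 hne) (hv1 e1) (hve ▸ hv1 e2))
    simpa [G.card_ends f] using this
  have hbound : ∀ f ∈ M, ∑ e ∈ M'.filter (fun e => g e = f), w (g e) ≤ 2 * w f := by
    intro f hf
    have : ∑ e ∈ M'.filter (fun e => g e = f), w (g e)
        = (M'.filter (fun e => g e = f)).card * w f := by
      rw [Finset.sum_congr rfl (fun e he => by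
        simp only [Finset.mem_filter] at he; rw [he.2]), Finset.sum_const,
        nsmul_eq_mul]
    rw [this]
    exact mul_le_mul_of_nonneg_right (by exact_mod_cast hcard f hf) (hw f)
  have : ∑ e ∈ M', w (g e) ≤ 2 * ∑ f ∈ M, w f := by
    rw [← hfib, Finset.mul_sum]
    exact Finset.sum_le_sum hbound
  linarith
end
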